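/- Let p be a prime and let (ℤ/pℤ, S) be an indecomposable nondegenerate affine braided set, i.e. S(x,y) = (a·x + b·y + h, c·x + d·y + t) for some a, b, c, d, h, t ∈ ℤ/pℤ. Then (ℤ/pℤ, S) is isomorphic to one of the following solutions: (i) S(x,y) = (q₁⁻¹·y + (1 − q₂·q₁⁻¹)·x + h', q₂·x − q₁·h') for some nonzero q₁ ≠ q₂ in ℤ/pℤ and h' ∈ ℤ/pℤ; or (ii) S(x,y) = (q₁⁻¹·y + h', q₂·x + (1 − q₂·q₁⁻¹)·y − q₂·h') for some nonzero q₁ ≠ q₂ in ℤ/pℤ and h' ∈ ℤ/pℤ; or (iii) S(x,y) = (y + h₁, x + h₂) for some (h₁, h₂) ≠ (0,0) in (ℤ/pℤ)². -/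

import Mathlib

/-- `S₁ = S × id` acting on the first two factors of `X × X × X`. -/
def braidL {X : Type*} (S : X × X → X × X) : X × X × X → X × X × X :=
  fun t => ((S (t.1, t.2.1)).1, (S (t.1, t.2.1)).2, t.2.2)

/-- `S₂ = id × S` acting on the last two factors of `X × X × X`. -/
def braidR {X : Type*} (S : X × X → X × X) : X × X × X → X × X × X :=
  fun t => (t.1, S (t.2.1, t.2.2))

/-- A braided set: `S` is a bijection satisfying `S₁S₂S₁ = S₂S₁S₂`. -/
def IsBraidedSet {X : Type*} (S : X × X → X × X) : Prop :=
  Function.Bijective S ∧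
    braidL S ∘ braidR S ∘ braidL S = braidR S ∘ braidL S ∘ braidR S

/-- Nondegeneracy: writing `S (x, y) = (g_x y, f_y x)`, each `g_x` and each `f_y`
is a bijection. -/
def Nondegenerate {X : Type*} (S : X × X → X × X) : Prop :=
  (∀ x, Function.Bijective fun y => (S (x, y)).1) ∧
    (∀ y, Function.Bijective fun x => (S (x, y)).2)

/-- Decomposability of a solution. -/
def Decomposable {X : Type*} (S : X × X → X × X) : Prop :=
  ∃ X₁ X₂ : Set X, X₁.Nonempty ∧ X₂.Nonempty ∧ Disjoint X₁ X₂ ∧ X₁ ∪ X₂ = Set.univ ∧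
    (∀ x ∈ X₁, ∀ y ∈ X₁, (S (x, y)).1 ∈ X₁ ∧ (S (x, y)).2 ∈ X₁) ∧
    (∀ x ∈ X₂, ∀ y ∈ X₂, (S (x, y)).1 ∈ X₂ ∧ (S (x, y)).2 ∈ X₂)

/-- Indecomposability of a solution. -/
def Indecomposable {X : Type*} (S : X × X → X × X) : Prop := ¬ Decomposable S

/-- Theorem 2.9(2): every indecomposable nondegenerate affine solution on `ℤ/pℤ`
is isomorphic to one of the solutions (i), (ii), (iii). -/
theorem affine_solution_classification
    {p : ℕ} (hp : p.Prime) (S : ZMod p × ZMod p → ZMod p × ZMod p)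
    (a b c d h t : ZMod p)
    (hS : ∀ x y : ZMod p, S (x, y) = (a * x + b * y + h, c * x + d * y + t))
    (hB : IsBraidedSet S) (hN : Nondegenerate S) (hI : Indecomposable S) :
    (∃ (q₁ q₂ h' : ZMod p) (φ : ZMod p ≃ ZMod p), q₁ ≠ 0 ∧ q₂ ≠ 0 ∧ q₁ ≠ q₂ ∧
      ∀ x y : ZMod p,
        φ ((S (x, y)).1) = q₁⁻¹ * φ y + (1 - q₂ * q₁⁻¹) * φ x + h' ∧
        φ ((S (x, y)).2) = q₂ * φ x - q₁ * h') ∨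
    (∃ (q₁ q₂ h' : ZMod p) (φ : ZMod p ≃ ZMod p), q₁ ≠ 0 ∧ q₂ ≠ 0 ∧ q₁ ≠ q₂ ∧
      ∀ x y : ZMod p,
        φ ((S (x, y)).1) = q₁⁻¹ * φ y + h' ∧
        φ ((S (x, y)).2) = q₂ * φ x + (1 - q₂ * q₁⁻¹) * φ y - q₂ * h') ∨
    (∃ (h₁ h₂ : ZMod p) (φ : ZMod p ≃ ZMod p), (h₁, h₂) ≠ (0, 0) ∧
      ∀ x y : ZMod p,
        φ ((S (x, y)).1) = φ y + h₁ ∧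
        φ ((S (x, y)).2) = φ x + h₂) := by
  haveI : Fact p.Prime := ⟨hp⟩
  -- nondegeneracy gives b ≠ 0 and c ≠ 0
  have hb : b ≠ 0 := by
    intro hb0
    have h01 : ((fun y => (S (0, y)).1) 0) = ((fun y => (S (0, y)).1) 1) := by
      simp [hS, hb0]
    exact one_ne_zero ((hN.1 0).injective h01).symm
  have hc : c ≠ 0 := by
    intro hc0
    have h01 : ((fun x => (S (x, 0)).2) 0) = ((fun x => (S (x, 0)).2) 1) := by
      simp [hS, hc0]
    exact one_ne_zero ((hN.2 0).injective h01).symm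
  -- braid equations
  have C : ∀ x y z : ZMod p,
      (a*(a*x+b*y+h)+b*(a*(c*x+d*y+t)+b*z+h)+h = a*x+b*(a*y+b*z+h)+h) ∧
      (c*(a*x+b*y+h)+d*(a*(c*x+d*y+t)+b*z+h)+t = a*(c*x+d*(a*y+b*z+h)+t)+b*(c*y+d*z+t)+h) ∧
      (c*(c*x+d*y+t)+d*z+t = c*(c*x+d*(a*y+b*z+h)+t)+d*(c*y+d*z+t)+t) := by
    intro x y z
    have H := congrFun hB.2 (x, y, z)
    simp only [Function.comp_apply, braidL, braidR, hS, Prod.mk.injEq] at H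
    exact ⟨H.1, H.2.1, H.2.2⟩
  have ead : a * d = 0 := by
    have habd : b * (a * d) = 0 := by linear_combination (C 0 1 0).1 - (C 0 0 0).1
    exact (mul_eq_zero.mp habd).resolve_left hb
  have e3 : a * (h + b * t) = 0 := by linear_combination (C 0 0 0).1
  have e1 : a * (a + b * c - 1) = 0 := by linear_combination (C 1 0 0).1 - (C 0 0 0).1
  have e5 : d * (d + b * c - 1) = 0 := by linear_combination (C 0 0 0).2.2 - (C 0 0 1).2.2
  have e6 : d * (c * h + t) = 0 := by linear_combination -(C 0 0 0).2.2
  have e4 : c*h + a*d*t + d*h + t = a*d*h + a*t + b*t + h := by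
    linear_combination (C 0 0 0).2.1
  by_cases ha : a = 0
  · by_cases hd : d = 0
    · -- Case A : a = 0, d = 0
      have e4' : c * h + t = b * t + h := by
        rw [ha, hd] at e4; linear_combination e4
      -- any common fixed point gives decomposability
      have decomp : ∀ x₀ : ZMod p, b * x₀ + h = x₀ → c * x₀ + t = x₀ → Decomposable S := by
        intro x₀ h1 h2
        refine ⟨{x₀}, {x₀}ᶜ, ⟨x₀, rfl⟩, ?_, disjoint_compl_right, by simp, ?_, ?_⟩
        · obtain ⟨y, hy⟩ := exists_ne x₀; exact ⟨y, hy⟩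
        · intro x hx y hy
          simp only [Set.mem_singleton_iff] at hx hy
          subst hx; subst hy
          constructor
          · simp only [hS, Set.mem_singleton_iff]
            rw [ha]; linear_combination h1
          · simp only [hS, Set.mem_singleton_iff]
            rw [hd]; linear_combination h2
        · intro x hx y hy
          simp only [Set.mem_compl_iff, Set.mem_singleton_iff] at hx hy ⊢
          constructor
          · simp only [hS]
            intro hcon
            apply hy
            have : b * y = b * x₀ := by rw [ha] at hcon; linear_combination hcon - h1
            exact mul_left_cancel₀ hb this
          · simp only [hS]
            intro hcon
            apply hx
            have : c * x = c * x₀ := by rw [hd] at hcon; linear_combination hcon - h2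
            exact mul_left_cancel₀ hc this
      by_cases hb1 : b = 1
      · by_cases hc1 : c = 1
        · by_cases hht : h = 0 ∧ t = 0
          · exact absurd (decomp 0 (by rw [hht.1]; ring) (by rw [hht.2]; ring)) hI
          · refine Or.inr (Or.inr ⟨h, t, Equiv.refl _, ?_, ?_⟩)
            · intro hcon
              rw [Prod.mk.injEq] at hcon
              exact hht hcon
            · intro x y
              simp only [hS, Equiv.refl_apply]
              constructor
              · rw [ha, hb1]; ring
              · rw [hd, hc1]; ring
        · -- c ≠ 1 : fixed point x₀ = (1-c)⁻¹ * t
          exfalso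
          apply hI
          have hcne : (1 : ZMod p) - c ≠ 0 := sub_ne_zero_of_ne (Ne.symm hc1)
          apply decomp ((1-c)⁻¹ * t)
          · field_simp
            linear_combination -e4'
          · field_simp
            ring
      · -- b ≠ 1 : fixed point x₀ = (1-b)⁻¹ * h
        exfalso
        apply hI
        have hbne : (1 : ZMod p) - b ≠ 0 := sub_ne_zero_of_ne (Ne.symm hb1)
        apply decomp ((1-b)⁻¹ * h)
        · field_simp
          ring
        · field_simp
          linear_combination e4'
    · -- Case C : a = 0, d ≠ 0
      have hd1 : d = 1 - b * c := by
        have := (mul_eq_zero.mp e5).resolve_left hd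
        linear_combination this
      have ht : t = -(c * h) := by
        have := (mul_eq_zero.mp e6).resolve_left hd
        linear_combination this
      refine Or.inr (Or.inl ⟨b⁻¹, c, h, Equiv.refl _, inv_ne_zero hb, hc, ?_, ?_⟩)
      · intro hcon
        apply hd
        rw [hd1, ← hcon]
        field_simp
        ring
      · intro x y
        simp only [hS, Equiv.refl_apply]
        constructor
        · rw [ha, inv_inv]; ring
        · rw [hd1, ht]
          field_simp
          ring
  · -- Case B : a ≠ 0
    have hd : d = 0 := (mul_eq_zero.mp ead).resolve_left ha
    have ha1 : a = 1 - b * c := by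
      have := (mul_eq_zero.mp e1).resolve_left ha
      linear_combination this
    have hh : h = -(b * t) := by
      have := (mul_eq_zero.mp e3).resolve_left ha
      linear_combination this
    refine Or.inl ⟨b⁻¹, c, h, Equiv.refl _, inv_ne_zero hb, hc, ?_, ?_⟩
    · intro hcon
      apply ha
      rw [ha1, ← hcon]
      field_simp
      ring
    · intro x y
      simp only [hS, Equiv.refl_apply]
      constructor
      · rw [ha1, inv_inv]; ring
      · rw [hd, hh]
        field_simp
        ring
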